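/- (Counting lemma from partial-sum majorization.) Let N ∈ ℕ and let u, v : Fin N → ℝ be nonincreasing sequences such that ∑_{i<k} u i ≤ ∑_{i<k} v i for every k ≤ N, and suppose v i ≤ V for all i. Let E ∈ ℝ and 0 ≤ γ < δ. Then (δ − γ) · #{i : u i > E + δ} ≤ (V − E − γ) · #{i : v i > E + γ}. -/

import Mathlib

open scoped BigOperators

/-- A downward-closed subset of `Fin N` is the initial segment of its cardinality. -/
lemma lower_set_mem_iff {N : ℕ} (S : Finset (Fin N))
    (hS : ∀ i j : Fin N, i ≤ j → j ∈ S → i ∈ S) (i : Fin N) :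
    i ∈ S ↔ (i : ℕ) < S.card := by
  constructor
  · intro hi
    have hsub : Finset.Iic i ⊆ S := fun j hj => hS j i (Finset.mem_Iic.mp hj) hi
    have := Finset.card_le_card hsub
    rw [Fin.card_Iic] at this
    omega
  · intro hi
    by_contra h
    have hsub : S ⊆ Finset.Iio i := by
      intro j hj
      rw [Finset.mem_Iio]
      rcases lt_or_ge j i with h' | h'
      · exact h'
      · exact absurd (hS i j h' hj) h
    have := Finset.card_le_card hsub
    rw [Fin.card_Iio] at this
    omega

/-- **Counting lemma from partial-sum majorization.** If `u, v : Fin N → ℝ` are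
nonincreasing, the partial sums of `u` are dominated by those of `v`, and `v ≤ V`,
then for `0 ≤ γ < δ` and any `E`:
`(δ - γ) · #{i | u i > E + δ} ≤ (V - E - γ) · #{i | v i > E + γ}`. -/
theorem counting_lemma_of_partial_sums (N : ℕ) (u v : Fin N → ℝ)
    (hu : Antitone u) (hv : Antitone v)
    (huv : ∀ k : ℕ, k ≤ N →
      (∑ i ∈ Finset.univ.filter (fun i : Fin N => (i : ℕ) < k), u i)
        ≤ ∑ i ∈ Finset.univ.filter (fun i : Fin N => (i : ℕ) < k), v i)
    (V : ℝ) (hV : ∀ i, v i ≤ V)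
    (E γ δ : ℝ) (hγ : 0 ≤ γ) (hγδ : γ < δ) :
    (δ - γ) * ((Finset.univ.filter (fun i : Fin N => E + δ < u i)).card : ℝ)
      ≤ (V - E - γ) * ((Finset.univ.filter (fun i : Fin N => E + γ < v i)).card : ℝ) := by
  set A := Finset.univ.filter (fun i : Fin N => E + δ < u i) with hA
  set B := Finset.univ.filter (fun i : Fin N => E + γ < v i) with hB
  set m := A.card with hm
  set n := B.card with hn
  -- A is downward closed
  have hAlow : ∀ i j : Fin N, i ≤ j → j ∈ A → i ∈ A := by
    intro i j hij hj
    simp only [hA, Finset.mem_filter, Finset.mem_univ, true_and] at *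
    exact lt_of_lt_of_le hj (hu hij)
  have hAeq : A = Finset.univ.filter (fun i : Fin N => (i : ℕ) < m) := by
    ext i
    simp only [Finset.mem_filter, Finset.mem_univ, true_and]
    exact lower_set_mem_iff A hAlow i
  have hmN : m ≤ N := by
    have := Finset.card_filter_le (Finset.univ : Finset (Fin N)) (fun i : Fin N => E + δ < u i)
    simpa using this
  -- case: m = 0
  rcases Nat.eq_zero_or_pos m with hm0 | hmpos
  · rw [hm0]
    simp only [Nat.cast_zero, mul_zero]
    rcases Nat.eq_zero_or_pos n with hn0 | hnpos
    · rw [hn0]; simp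
    · -- B nonempty, so V - E - γ > 0
      obtain ⟨i, hi⟩ := Finset.card_pos.mp hnpos
      simp only [hB, Finset.mem_filter, Finset.mem_univ, true_and] at hi
      have : E + γ < V := lt_of_lt_of_le hi (hV i)
      have : (0:ℝ) ≤ V - E - γ := by linarith
      exact mul_nonneg this (Nat.cast_nonneg _)
  · -- main case: m > 0
    have hsum := huv m hmN
    rw [← hAeq] at hsum
    have h1 : (m : ℝ) * (E + δ) < ∑ i ∈ A, u i := by
      have : ∑ i ∈ A, (E + δ) < ∑ i ∈ A, u i := by
        apply Finset.sum_lt_sum_of_nonempty (Finset.card_pos.mp hmpos)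
        intro i hi
        simp only [hA, Finset.mem_filter, Finset.mem_univ, true_and] at hi
        exact hi
      rw [Finset.sum_const, nsmul_eq_mul] at this
      exact this
    set c := (A ∩ B).card with hc
    have hcd : c + (A \ B).card = m := Finset.card_inter_add_card_sdiff A B
    have h2 : ∑ i ∈ A, v i ≤ (c : ℝ) * V + ((m - c : ℕ) : ℝ) * (E + γ) := by
      rw [← Finset.sum_inter_add_sum_sdiff A B v]
      have h21 : ∑ i ∈ A ∩ B, v i ≤ (c : ℝ) * V := by
        have := Finset.sum_le_card_nsmul (A ∩ B) v V (fun i _ => hV i)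
        simpa [nsmul_eq_mul] using this
      have h22 : ∑ i ∈ A \ B, v i ≤ ((m - c : ℕ) : ℝ) * (E + γ) := by
        have hle : ∀ i ∈ A \ B, v i ≤ E + γ := by
          intro i hi
          simp only [Finset.mem_sdiff, hB, Finset.mem_filter, Finset.mem_univ, true_and,
            not_lt] at hi
          exact hi.2
        have := Finset.sum_le_card_nsmul (A \ B) v (E + γ) hle
        have hcard : (A \ B).card = m - c := by omega
        rw [hcard, nsmul_eq_mul] at this
        exact this
      linarith
    have hcn : c ≤ n := Finset.card_le_card (Finset.inter_subset_right)
    have hcm : c ≤ m := by omega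
    have hsub : ((m - c : ℕ) : ℝ) = (m : ℝ) - (c : ℝ) := by
      push_cast [Nat.cast_sub hcm]; ring
    rw [hsub] at h2
    -- from m(E+δ) < cV + (m-c)(E+γ): m(δ-γ) < c(V-E-γ)
    have key : (m : ℝ) * (δ - γ) < (c : ℝ) * (V - E - γ) := by nlinarith
    rcases Nat.eq_zero_or_pos c with hc0 | hcpos
    · exfalso
      rw [hc0] at key
      simp at key
      have : (0:ℝ) < (m : ℝ) * (δ - γ) := by
        have : (0:ℝ) < (m : ℝ) := by exact_mod_cast hmpos
        nlinarith
      linarith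
    · obtain ⟨i, hi⟩ := Finset.card_pos.mp hcpos
      simp only [Finset.mem_inter, hB, Finset.mem_filter, Finset.mem_univ, true_and] at hi
      have hVpos : (0:ℝ) ≤ V - E - γ := by
        have := lt_of_lt_of_le hi.2 (hV i); linarith
      have : (c : ℝ) * (V - E - γ) ≤ (n : ℝ) * (V - E - γ) := by
        apply mul_le_mul_of_nonneg_right _ hVpos
        exact_mod_cast hcn
      linarith
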